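/- arXiv:math-ph/0408048 — 3 statements merged into one kernel-verified Lean document; each statement's English description precedes it below -/
import Mathlib

section
/- The map t ↦ ‖α_t(f) − f‖_{L,N}, for f ∈ S(ℝ^d) and fixed L, N ∈ ℕ, is continuous in t and exponentially bounded: there exist C, M > 0 with ‖α_t(f) − f‖_{L,N} ≤ C exp(M|t|) for all t ∈ ℝ. -/
set_option maxHeartbeats 4000000
set_option synthInstance.maxHeartbeats 400000


/-- The `x⁰`–`x¹` Lorentz boost matrix on `ℝ^d`. -/
noncomputable def boost (d : ℕ) (t : ℝ) : Matrix (Fin d) (Fin d) ℝ := fun i j =>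
  if (i : ℕ) = 0 ∧ (j : ℕ) = 0 then Real.cosh t
  else if (i : ℕ) = 1 ∧ (j : ℕ) = 1 then Real.cosh t
  else if (i : ℕ) = 0 ∧ (j : ℕ) = 1 then Real.sinh t
  else if (i : ℕ) = 1 ∧ (j : ℕ) = 0 then Real.sinh t
  else if i = j then 1 else 0

/-- The action of the boost matrix on `ℝ^d` (as Euclidean space). -/
noncomputable def boostVec (d : ℕ) (t : ℝ) (x : EuclideanSpace ℝ (Fin d)) :
    EuclideanSpace ℝ (Fin d) :=
  (WithLp.equiv 2 (Fin d → ℝ)).symm ((boost d t).mulVec ((WithLp.equiv 2 (Fin d → ℝ)) x))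

/-- The Schwartz seminorm `‖f‖_{L,N}`. -/
noncomputable def schNorm (d L N : ℕ) (f : EuclideanSpace ℝ (Fin d) → ℂ) : ℝ :=
  ⨆ p : EuclideanSpace ℝ (Fin d) × Fin (L + 1),
    (1 + ‖p.1‖ ^ 2) ^ ((N : ℝ) / 2) * ‖iteratedFDeriv ℝ (p.2 : ℕ) f p.1‖

namespace SchNormAux

noncomputable def bC (d : ℕ) (t : ℝ) : EuclideanSpace ℝ (Fin d) →L[ℝ] EuclideanSpace ℝ (Fin d) :=
  LinearMap.toContinuousLinearMap
    (((WithLp.linearEquiv 2 ℝ (Fin d → ℝ)).symm.toLinearMap.comp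
      ((boost d t).mulVecLin)).comp (WithLp.linearEquiv 2 ℝ (Fin d → ℝ)).toLinearMap)

variable {d : ℕ}

lemma bC_apply (t : ℝ) (x : EuclideanSpace ℝ (Fin d)) (i : Fin d) :
    bC d t x i = (boost d t).mulVec (x : Fin d → ℝ) i := rfl

lemma bC_eq_boostVec (t : ℝ) (x : EuclideanSpace ℝ (Fin d)) : bC d t x = boostVec d t x := rfl

lemma coord (t : ℝ) (x : Fin d → ℝ) (i : Fin d) :
    (boost d t).mulVec x i =
      if (i : ℕ) = 0 then
        Real.cosh t * x i + Real.sinh t * (if h : 1 < d then x ⟨1, h⟩ else 0)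
      else if (i : ℕ) = 1 then
        Real.sinh t * x ⟨0, i.pos⟩ + Real.cosh t * x i
      else x i := by
  have hmv : (boost d t).mulVec x i = ∑ j, boost d t i j * x j := by
    simp [Matrix.mulVec, dotProduct]
  by_cases h0 : (i : ℕ) = 0
  · rw [if_pos h0, hmv]
    have hterm : ∀ j : Fin d, boost d t i j * x j =
        (if j = i then Real.cosh t * x j else 0) +
        (if (j : ℕ) = 1 then Real.sinh t * x j else 0) := by
      intro j
      by_cases hj0 : (j : ℕ) = 0
      · have hji : j = i := Fin.ext (by omega)
        simp [boost, h0, hj0, hji]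
      · by_cases hj1 : (j : ℕ) = 1
        · have hji : ¬ j = i := by simp [Fin.ext_iff]; omega
          simp [boost, h0, hj0, hj1, hji]
        · have hji : ¬ j = i := by simp [Fin.ext_iff]; omega
          simp [boost, h0, hj0, hj1, hji]
          intro h; rw [h] at h0; exact absurd h0 hj0
    rw [Finset.sum_congr rfl (fun j _ => hterm j), Finset.sum_add_distrib]
    congr 1
    · rw [Finset.sum_ite_eq' Finset.univ i (fun j => Real.cosh t * x j)]
      simp
    · by_cases hd : 1 < d
      · rw [dif_pos hd]
        have hiff : ∀ j : Fin d, ((j : ℕ) = 1) = (j = (⟨1, hd⟩ : Fin d)) := by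
          intro j; simp [Fin.ext_iff]
        simp_rw [hiff]
        rw [Finset.sum_ite_eq' Finset.univ (⟨1, hd⟩ : Fin d) (fun j => Real.sinh t * x j)]
        simp
      · rw [dif_neg hd]
        have : ∀ j : Fin d, ¬ ((j : ℕ) = 1) := by
          intro j; have := j.isLt; omega
        simp [this]
  · by_cases h1 : (i : ℕ) = 1
    · rw [if_neg h0, if_pos h1, hmv]
      have hterm : ∀ j : Fin d, boost d t i j * x j =
          (if j = (⟨0, i.pos⟩ : Fin d) then Real.sinh t * x j else 0) +
          (if j = i then Real.cosh t * x j else 0) := by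
        intro j
        by_cases hj0 : (j : ℕ) = 0
        · have hji : j = (⟨0, i.pos⟩ : Fin d) := Fin.ext (by simpa using hj0)
          have hji' : ¬ j = i := by simp [Fin.ext_iff]; omega
          simp [boost, h0, h1, hj0, hji, hji']
          intro h; have := congrArg Fin.val h; simp at this; omega
        · by_cases hj1 : (j : ℕ) = 1
          · have hji : j = i := Fin.ext (by omega)
            have hji' : ¬ j = (⟨0, i.pos⟩ : Fin d) := by simp [Fin.ext_iff]; omega
            simp [boost, h0, h1, hj0, hj1, hji, hji']
            intro h; have := congrArg Fin.val h; simp at this; omega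
          · have hji : ¬ j = i := by simp [Fin.ext_iff]; omega
            have hji' : ¬ j = (⟨0, i.pos⟩ : Fin d) := by simp [Fin.ext_iff]; omega
            simp [boost, h0, h1, hj0, hj1, hji, hji']
            intro h; rw [h] at h1; exact absurd h1 hj1
      rw [Finset.sum_congr rfl (fun j _ => hterm j), Finset.sum_add_distrib]
      congr 1
      · rw [Finset.sum_ite_eq' Finset.univ (⟨0, i.pos⟩ : Fin d) (fun j => Real.sinh t * x j)]
        simp
      · rw [Finset.sum_ite_eq' Finset.univ i (fun j => Real.cosh t * x j)]
        simp
    · rw [if_neg h0, if_neg h1, hmv]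
      have hterm : ∀ j : Fin d, boost d t i j * x j =
          (if j = i then x j else 0) := by
        intro j
        by_cases hji : j = i
        · subst hji
          simp [boost, h0, h1]
        · have h2 : ¬ i = j := fun h => hji h.symm
          by_cases hj0 : (j : ℕ) = 0 <;> by_cases hj1 : (j : ℕ) = 1 <;>
            simp [boost, h0, h1, hj0, hj1, hji, h2]
      rw [Finset.sum_congr rfl (fun j _ => hterm j)]
      rw [Finset.sum_ite_eq' Finset.univ i (fun j => x j)]
      simp

end SchNormAux

namespace SchNormAux

variable {d : ℕ}

lemma norm_sq_eq (y : EuclideanSpace ℝ (Fin d)) : ‖y‖ ^ 2 = ∑ i, (y i) ^ 2 := by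
  rw [EuclideanSpace.norm_eq, Real.sq_sqrt (by positivity)]
  simp [Real.norm_eq_abs, sq_abs]

lemma sum_split (hd : 1 < d) (F : Fin d → ℝ) :
    ∑ i, F i = F ⟨0, by omega⟩ + (F ⟨1, hd⟩ +
      ∑ i ∈ (Finset.univ.erase ⟨0, by omega⟩).erase ⟨1, hd⟩, F i) := by
  rw [Finset.add_sum_erase _ F (Finset.mem_erase.mpr
    ⟨by simp [Fin.ext_iff], Finset.mem_univ _⟩)]
  rw [Finset.add_sum_erase _ F (Finset.mem_univ _)]

lemma exp_abs_eq (t : ℝ) : Real.exp |t| = Real.cosh t + |Real.sinh t| := by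
  rw [Real.abs_sinh, ← Real.cosh_abs t, Real.cosh_add_sinh]

lemma block_upper (t a b : ℝ) :
    (Real.cosh t * a + Real.sinh t * b) ^ 2 + (Real.sinh t * a + Real.cosh t * b) ^ 2 ≤
      (Real.exp |t|) ^ 2 * (a ^ 2 + b ^ 2) := by
  rw [exp_abs_eq]
  set c := Real.cosh t with hcdef
  set s := Real.sinh t with hsdef
  have h1 : s * (a * b) ≤ |s| * |a * b| := by
    calc s * (a * b) ≤ |s * (a * b)| := le_abs_self _
    _ = |s| * |a * b| := abs_mul _ _
  have h2 : |a * b| ≤ (a ^ 2 + b ^ 2) / 2 := by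
    rw [abs_mul]
    nlinarith [sq_nonneg (|a| - |b|), sq_abs a, sq_abs b, abs_nonneg a, abs_nonneg b]
  have hc : 1 ≤ c := Real.one_le_cosh t
  have hs : 0 ≤ |s| := abs_nonneg s
  have h3 : s * (a * b) ≤ |s| * ((a ^ 2 + b ^ 2) / 2) :=
    h1.trans (mul_le_mul_of_nonneg_left h2 hs)
  have h4 : (0:ℝ) ≤ c := by linarith
  nlinarith [mul_le_mul_of_nonneg_left h3 h4, sq_abs s]

lemma block_lower (t a b : ℝ) :
    a ^ 2 + b ^ 2 ≤ (Real.exp |t|) ^ 2 *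
      ((Real.cosh t * a + Real.sinh t * b) ^ 2 + (Real.sinh t * a + Real.cosh t * b) ^ 2) := by
  rw [exp_abs_eq]
  set c := Real.cosh t with hcdef
  set s := Real.sinh t with hsdef
  have h1' : -(s * (a * b)) ≤ |s| * |a * b| := by
    calc -(s * (a * b)) ≤ |s * (a * b)| := neg_le_abs _
    _ = |s| * |a * b| := abs_mul _ _
  have h2 : |a * b| ≤ (a ^ 2 + b ^ 2) / 2 := by
    rw [abs_mul]
    nlinarith [sq_nonneg (|a| - |b|), sq_abs a, sq_abs b, abs_nonneg a, abs_nonneg b]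
  have hc : 1 ≤ c := Real.one_le_cosh t
  have hs : 0 ≤ |s| := abs_nonneg s
  have h3 : -(s * (a * b)) ≤ |s| * ((a ^ 2 + b ^ 2) / 2) :=
    h1'.trans (mul_le_mul_of_nonneg_left h2 hs)
  have h4 : (0:ℝ) ≤ c := by linarith
  have hkey : (c - |s|) ^ 2 * (a ^ 2 + b ^ 2) ≤
      (c * a + s * b) ^ 2 + (s * a + c * b) ^ 2 := by
    nlinarith [mul_le_mul_of_nonneg_left h3 h4, sq_abs s]
  have hprod : (c - |s|) * (c + |s|) = 1 := by
    have hcs := Real.cosh_sq_sub_sinh_sq t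
    nlinarith [sq_abs s]
  calc a ^ 2 + b ^ 2 = (c + |s|) ^ 2 * ((c - |s|) ^ 2 * (a ^ 2 + b ^ 2)) := by
        linear_combination (-((c - |s|) * (c + |s|) + 1) * (a ^ 2 + b ^ 2)) * hprod
    _ ≤ (c + |s|) ^ 2 * ((c * a + s * b) ^ 2 + (s * a + c * b) ^ 2) :=
        mul_le_mul_of_nonneg_left hkey (sq_nonneg _)

lemma block_diff (u v a b : ℝ) :
    (u * a + v * b) ^ 2 + (v * a + u * b) ^ 2 ≤
      (2 * (|u| + |v|)) ^ 2 * (a ^ 2 + b ^ 2) := by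
  nlinarith [sq_abs u, sq_abs v, abs_nonneg u, abs_nonneg v, sq_nonneg (u * a - v * b),
    sq_nonneg (v * a - u * b), sq_nonneg (u * a + v * b), sq_nonneg (v * a + u * b),
    mul_nonneg (mul_nonneg (abs_nonneg u) (abs_nonneg v))
      (by positivity : (0:ℝ) ≤ a ^ 2 + b ^ 2)]

end SchNormAux

namespace SchNormAux

variable {d : ℕ}

lemma vec_upper (t : ℝ) (x : EuclideanSpace ℝ (Fin d)) : ‖bC d t x‖ ≤ Real.exp |t| * ‖x‖ := by
  have hnn : (0:ℝ) ≤ Real.exp |t| * ‖x‖ := by positivity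
  refine le_of_pow_le_pow_left₀ two_ne_zero hnn ?_
  rw [mul_pow, norm_sq_eq, norm_sq_eq]
  by_cases hd : 1 < d
  · have h0d : 0 < d := by omega
    rw [sum_split hd (fun i => (bC d t x i) ^ 2), sum_split hd (fun i => (x i) ^ 2)]
    have e0 : bC d t x ⟨0, h0d⟩ = Real.cosh t * x ⟨0, h0d⟩ + Real.sinh t * x ⟨1, hd⟩ := by
      rw [bC_apply, coord]; simp [hd]
    have e1 : bC d t x ⟨1, hd⟩ = Real.sinh t * x ⟨0, h0d⟩ + Real.cosh t * x ⟨1, hd⟩ := by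
      rw [bC_apply, coord]; simp
    have etail : ∀ i ∈ (Finset.univ.erase (⟨0, h0d⟩ : Fin d)).erase ⟨1, hd⟩,
        (bC d t x i) ^ 2 = (x i) ^ 2 := by
      intro i hi
      simp only [Finset.mem_erase] at hi
      have hv1 : ¬((i:ℕ) = 1) := by
        intro h; exact hi.1 (by simpa [Fin.ext_iff] using h)
      have hv0 : ¬((i:ℕ) = 0) := by
        intro h; exact hi.2.1 (by simpa [Fin.ext_iff] using h)
      rw [bC_apply, coord, if_neg hv0, if_neg hv1]
    rw [e0, e1, Finset.sum_congr rfl etail]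
    have hE : 1 ≤ (Real.exp |t|) ^ 2 := one_le_pow₀ (Real.one_le_exp (abs_nonneg t))
    have hR : 0 ≤ ∑ i ∈ (Finset.univ.erase (⟨0, h0d⟩ : Fin d)).erase ⟨1, hd⟩, (x i) ^ 2 :=
      Finset.sum_nonneg fun i _ => sq_nonneg _
    nlinarith [block_upper t (x ⟨0, h0d⟩) (x ⟨1, hd⟩), hE, hR]
  · have hd' : d = 0 ∨ d = 1 := by omega
    rcases hd' with h | h <;> subst h
    · simp
    · rw [Fin.sum_univ_one, Fin.sum_univ_one]
      have e0 : bC 1 t x 0 = Real.cosh t * x 0 := by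
        rw [bC_apply, coord]; norm_num
      rw [e0]
      have h1 : Real.cosh t ≤ Real.exp |t| := by
        rw [exp_abs_eq]; linarith [abs_nonneg (Real.sinh t)]
      have h2 : (0:ℝ) ≤ Real.cosh t := by linarith [Real.one_le_cosh t]
      have h3 : (Real.cosh t) ^ 2 ≤ (Real.exp |t|) ^ 2 := by nlinarith
      nlinarith [mul_le_mul_of_nonneg_right h3 (sq_nonneg (x 0))]

lemma vec_lower (t : ℝ) (x : EuclideanSpace ℝ (Fin d)) : ‖x‖ ≤ Real.exp |t| * ‖bC d t x‖ := by
  have hnn : (0:ℝ) ≤ Real.exp |t| * ‖bC d t x‖ := by positivity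
  refine le_of_pow_le_pow_left₀ two_ne_zero hnn ?_
  rw [mul_pow, norm_sq_eq, norm_sq_eq]
  by_cases hd : 1 < d
  · have h0d : 0 < d := by omega
    rw [sum_split hd (fun i => (bC d t x i) ^ 2), sum_split hd (fun i => (x i) ^ 2)]
    have e0 : bC d t x ⟨0, h0d⟩ = Real.cosh t * x ⟨0, h0d⟩ + Real.sinh t * x ⟨1, hd⟩ := by
      rw [bC_apply, coord]; simp [hd]
    have e1 : bC d t x ⟨1, hd⟩ = Real.sinh t * x ⟨0, h0d⟩ + Real.cosh t * x ⟨1, hd⟩ := by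
      rw [bC_apply, coord]; simp
    have etail : ∀ i ∈ (Finset.univ.erase (⟨0, h0d⟩ : Fin d)).erase ⟨1, hd⟩,
        (bC d t x i) ^ 2 = (x i) ^ 2 := by
      intro i hi
      simp only [Finset.mem_erase] at hi
      have hv1 : ¬((i:ℕ) = 1) := by
        intro h; exact hi.1 (by simpa [Fin.ext_iff] using h)
      have hv0 : ¬((i:ℕ) = 0) := by
        intro h; exact hi.2.1 (by simpa [Fin.ext_iff] using h)
      rw [bC_apply, coord, if_neg hv0, if_neg hv1]
    rw [e0, e1, Finset.sum_congr rfl etail]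
    have hE : 1 ≤ (Real.exp |t|) ^ 2 := one_le_pow₀ (Real.one_le_exp (abs_nonneg t))
    have hR : 0 ≤ ∑ i ∈ (Finset.univ.erase (⟨0, h0d⟩ : Fin d)).erase ⟨1, hd⟩, (x i) ^ 2 :=
      Finset.sum_nonneg fun i _ => sq_nonneg _
    nlinarith [block_lower t (x ⟨0, h0d⟩) (x ⟨1, hd⟩), hE, hR]
  · have hd' : d = 0 ∨ d = 1 := by omega
    rcases hd' with h | h <;> subst h
    · simp
    · rw [Fin.sum_univ_one, Fin.sum_univ_one]
      have e0 : bC 1 t x 0 = Real.cosh t * x 0 := by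
        rw [bC_apply, coord]; norm_num
      rw [e0]
      have hc : 1 ≤ Real.cosh t := Real.one_le_cosh t
      have hE : 1 ≤ Real.exp |t| := Real.one_le_exp (abs_nonneg t)
      have h3 : 1 ≤ (Real.exp |t|) ^ 2 * (Real.cosh t) ^ 2 := by nlinarith [hc, hE, sq_nonneg (Real.exp |t| - 1), sq_nonneg (Real.cosh t - 1), mul_le_mul hE hc zero_le_one (by linarith)]
      nlinarith [mul_le_mul_of_nonneg_right h3 (sq_nonneg (x 0))]

lemma vec_diff (t s : ℝ) (x : EuclideanSpace ℝ (Fin d)) :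
    ‖bC d t x - bC d s x‖ ≤
      (2 * (|Real.cosh t - Real.cosh s| + |Real.sinh t - Real.sinh s|)) * ‖x‖ := by
  have hnn : (0:ℝ) ≤ (2 * (|Real.cosh t - Real.cosh s| + |Real.sinh t - Real.sinh s|)) * ‖x‖ := by
    positivity
  refine le_of_pow_le_pow_left₀ two_ne_zero hnn ?_
  rw [mul_pow, norm_sq_eq, norm_sq_eq]
  have happ : ∀ i : Fin d, (bC d t x - bC d s x) i = bC d t x i - bC d s x i := fun i => rfl
  by_cases hd : 1 < d
  · have h0d : 0 < d := by omega
    rw [sum_split hd (fun i => ((bC d t x - bC d s x) i) ^ 2),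
      sum_split hd (fun i => (x i) ^ 2)]
    have e0t : bC d t x ⟨0, h0d⟩ = Real.cosh t * x ⟨0, h0d⟩ + Real.sinh t * x ⟨1, hd⟩ := by
      rw [bC_apply, coord]; simp [hd]
    have e1t : bC d t x ⟨1, hd⟩ = Real.sinh t * x ⟨0, h0d⟩ + Real.cosh t * x ⟨1, hd⟩ := by
      rw [bC_apply, coord]; simp
    have e0s : bC d s x ⟨0, h0d⟩ = Real.cosh s * x ⟨0, h0d⟩ + Real.sinh s * x ⟨1, hd⟩ := by
      rw [bC_apply, coord]; simp [hd]
    have e1s : bC d s x ⟨1, hd⟩ = Real.sinh s * x ⟨0, h0d⟩ + Real.cosh s * x ⟨1, hd⟩ := by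
      rw [bC_apply, coord]; simp
    have etail : ∀ i ∈ (Finset.univ.erase (⟨0, h0d⟩ : Fin d)).erase ⟨1, hd⟩,
        ((bC d t x - bC d s x) i) ^ 2 = 0 := by
      intro i hi
      simp only [Finset.mem_erase] at hi
      have hv1 : ¬((i:ℕ) = 1) := by
        intro h; exact hi.1 (by simpa [Fin.ext_iff] using h)
      have hv0 : ¬((i:ℕ) = 0) := by
        intro h; exact hi.2.1 (by simpa [Fin.ext_iff] using h)
      rw [happ, bC_apply, bC_apply, coord, coord, if_neg hv0, if_neg hv1, if_neg hv0, if_neg hv1]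
      simp
    rw [Finset.sum_congr rfl etail, Finset.sum_const, smul_zero]
    rw [happ, happ, e0t, e1t, e0s, e1s]
    have hR : 0 ≤ ∑ i ∈ (Finset.univ.erase (⟨0, h0d⟩ : Fin d)).erase ⟨1, hd⟩, (x i) ^ 2 :=
      Finset.sum_nonneg fun i _ => sq_nonneg _
    have hB := block_diff (Real.cosh t - Real.cosh s) (Real.sinh t - Real.sinh s)
      (x ⟨0, h0d⟩) (x ⟨1, hd⟩)
    have hC2 : 0 ≤ (2 * (|Real.cosh t - Real.cosh s| + |Real.sinh t - Real.sinh s|)) ^ 2 := by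
      positivity
    nlinarith [hB, hR, hC2]
  · have hd' : d = 0 ∨ d = 1 := by omega
    rcases hd' with h | h <;> subst h
    · simp
    · rw [Fin.sum_univ_one, Fin.sum_univ_one]
      rw [happ]
      have e0t : bC 1 t x 0 = Real.cosh t * x 0 := by rw [bC_apply, coord]; norm_num
      have e0s : bC 1 s x 0 = Real.cosh s * x 0 := by rw [bC_apply, coord]; norm_num
      rw [e0t, e0s]
      nlinarith [sq_abs (Real.cosh t - Real.cosh s), abs_nonneg (Real.cosh t - Real.cosh s),
        abs_nonneg (Real.sinh t - Real.sinh s), sq_nonneg (x 0),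
        mul_nonneg (mul_nonneg (abs_nonneg (Real.cosh t - Real.cosh s))
          (abs_nonneg (Real.sinh t - Real.sinh s))) (sq_nonneg (x 0)),
        mul_nonneg (mul_nonneg (abs_nonneg (Real.sinh t - Real.sinh s))
          (abs_nonneg (Real.sinh t - Real.sinh s))) (sq_nonneg (x 0))]

end SchNormAux

namespace SchNormAux

variable {d : ℕ}

lemma opNorm_bC_le (t : ℝ) : ‖bC d t‖ ≤ Real.exp |t| :=
  ContinuousLinearMap.opNorm_le_bound _ (Real.exp_pos _).le (vec_upper t)

noncomputable def cB2 (t s : ℝ) : ℝ :=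
  2 * (|Real.cosh t - Real.cosh s| + |Real.sinh t - Real.sinh s|)

lemma cB2_nonneg (t s : ℝ) : 0 ≤ cB2 t s := by unfold cB2; positivity

lemma opNorm_bC_sub_le (t s : ℝ) : ‖bC d t - bC d s‖ ≤ cB2 t s :=
  ContinuousLinearMap.opNorm_le_bound _ (cB2_nonneg t s) (fun x => by
    simpa [ContinuousLinearMap.sub_apply, cB2] using vec_diff t s x)

variable {L N : ℕ}

noncomputable def Ssup (L N : ℕ) (g : SchwartzMap (EuclideanSpace ℝ (Fin d)) ℂ) : ℝ :=
  ((Finset.Iic (2*N+1, L+1)).sup (fun m => SchwartzMap.seminorm ℝ m.1 m.2)) g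

lemma Ssup_nonneg (g : SchwartzMap (EuclideanSpace ℝ (Fin d)) ℂ) : 0 ≤ Ssup L N g :=
  apply_nonneg _ _

lemma key_decay (g : SchwartzMap (EuclideanSpace ℝ (Fin d)) ℂ) {k n : ℕ}
    (hk : k ≤ 2*N+1) (hn : n ≤ L+1) (x : EuclideanSpace ℝ (Fin d)) :
    (1+‖x‖)^k * ‖iteratedFDeriv ℝ n (⇑g) x‖ ≤ 2^(2*N+1) * Ssup L N g :=
  SchwartzMap.one_add_le_sup_seminorm_apply (m := (2*N+1, L+1)) hk hn g x

lemma weight_nonneg (N : ℕ) (x : EuclideanSpace ℝ (Fin d)) :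
    0 ≤ (1+‖x‖^2) ^ ((N:ℝ)/2) := Real.rpow_nonneg (by positivity) _

lemma weight_le (x : EuclideanSpace ℝ (Fin d)) :
    (1+‖x‖^2) ^ ((N:ℝ)/2) ≤ (1+‖x‖)^N := by
  have h2 : (1:ℝ)+‖x‖^2 ≤ (1+‖x‖)^2 := by nlinarith [norm_nonneg x]
  calc (1+‖x‖^2) ^ ((N:ℝ)/2) ≤ ((1+‖x‖)^2) ^ ((N:ℝ)/2) :=
        Real.rpow_le_rpow (by positivity) h2 (by positivity)
    _ = (1+‖x‖)^N := by
        rw [← Real.rpow_natCast (1+‖x‖) 2, ← Real.rpow_mul (by positivity)]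
        rw [← Real.rpow_natCast (1+‖x‖) N]
        congr 1
        ring

lemma term_le (g : SchwartzMap (EuclideanSpace ℝ (Fin d)) ℂ)
    (x : EuclideanSpace ℝ (Fin d)) (n : Fin (L+1)) :
    (1+‖x‖^2) ^ ((N:ℝ)/2) * ‖iteratedFDeriv ℝ (n:ℕ) (⇑g) x‖ ≤ 2^(2*N+1) * Ssup L N g :=
  calc (1+‖x‖^2) ^ ((N:ℝ)/2) * ‖iteratedFDeriv ℝ (n:ℕ) (⇑g) x‖
      ≤ (1+‖x‖)^N * ‖iteratedFDeriv ℝ (n:ℕ) (⇑g) x‖ :=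
        mul_le_mul_of_nonneg_right (weight_le x) (norm_nonneg _)
    _ ≤ 2^(2*N+1) * Ssup L N g := key_decay g (by omega) (by have := n.isLt; omega) x

lemma bddAbove_term (g : SchwartzMap (EuclideanSpace ℝ (Fin d)) ℂ) :
    BddAbove (Set.range fun p : EuclideanSpace ℝ (Fin d) × Fin (L+1) =>
      (1+‖p.1‖^2) ^ ((N:ℝ)/2) * ‖iteratedFDeriv ℝ (p.2:ℕ) (⇑g) p.1‖) :=
  ⟨2^(2*N+1) * Ssup L N g, by rintro y ⟨p, rfl⟩; exact term_le g p.1 p.2⟩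

lemma le_schNorm (g : SchwartzMap (EuclideanSpace ℝ (Fin d)) ℂ)
    (x : EuclideanSpace ℝ (Fin d)) (n : Fin (L+1)) :
    (1+‖x‖^2) ^ ((N:ℝ)/2) * ‖iteratedFDeriv ℝ (n:ℕ) (⇑g) x‖ ≤ schNorm d L N ⇑g :=
  le_ciSup (bddAbove_term g) (x, n)

lemma schNorm_le {F : EuclideanSpace ℝ (Fin d) → ℂ} {C : ℝ}
    (h : ∀ (x : EuclideanSpace ℝ (Fin d)) (n : Fin (L+1)),
      (1+‖x‖^2) ^ ((N:ℝ)/2) * ‖iteratedFDeriv ℝ (n:ℕ) F x‖ ≤ C) :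
    schNorm d L N F ≤ C := by
  haveI : Nonempty (EuclideanSpace ℝ (Fin d) × Fin (L+1)) := ⟨(0, 0)⟩
  exact ciSup_le (fun p => h p.1 p.2)

lemma iter_add (a b : SchwartzMap (EuclideanSpace ℝ (Fin d)) ℂ)
    (x : EuclideanSpace ℝ (Fin d)) (n : ℕ) :
    ‖iteratedFDeriv ℝ n (⇑(a + b)) x‖ ≤
      ‖iteratedFDeriv ℝ n (⇑a) x‖ + ‖iteratedFDeriv ℝ n (⇑b) x‖ := by
  have h : ⇑(a + b) = ⇑a + ⇑b := by funext y; simp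
  rw [h, iteratedFDeriv_add_apply (a.smooth n).contDiffAt (b.smooth n).contDiffAt]
  exact norm_add_le _ _

lemma schNorm_tri (a b : SchwartzMap (EuclideanSpace ℝ (Fin d)) ℂ) :
    schNorm d L N ⇑a ≤ schNorm d L N ⇑(a - b) + schNorm d L N (⇑b) := by
  apply schNorm_le
  intro x n
  have h1 : ‖iteratedFDeriv ℝ (n:ℕ) (⇑a) x‖ ≤
      ‖iteratedFDeriv ℝ (n:ℕ) (⇑(a-b)) x‖ + ‖iteratedFDeriv ℝ (n:ℕ) (⇑b) x‖ := by
    have := iter_add (a - b) b x (n:ℕ)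
    rwa [sub_add_cancel] at this
  calc (1+‖x‖^2) ^ ((N:ℝ)/2) * ‖iteratedFDeriv ℝ (n:ℕ) (⇑a) x‖
      ≤ (1+‖x‖^2) ^ ((N:ℝ)/2) * (‖iteratedFDeriv ℝ (n:ℕ) (⇑(a-b)) x‖ +
          ‖iteratedFDeriv ℝ (n:ℕ) (⇑b) x‖) :=
        mul_le_mul_of_nonneg_left h1 (weight_nonneg N x)
    _ = (1+‖x‖^2) ^ ((N:ℝ)/2) * ‖iteratedFDeriv ℝ (n:ℕ) (⇑(a-b)) x‖ +
          (1+‖x‖^2) ^ ((N:ℝ)/2) * ‖iteratedFDeriv ℝ (n:ℕ) (⇑b) x‖ := mul_add _ _ _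
    _ ≤ _ := add_le_add (le_schNorm (a-b) x n) (le_schNorm b x n)

end SchNormAux

namespace SchNormAux

variable {d L N : ℕ}

noncomputable def uS (d : ℕ) (f : SchwartzMap (EuclideanSpace ℝ (Fin d)) ℂ) (t : ℝ) :
    SchwartzMap (EuclideanSpace ℝ (Fin d)) ℂ :=
  SchwartzMap.compCLM ℝ (bC d t).hasTemperateGrowth
    ⟨1, Real.exp |t|, fun x => by
      rw [pow_one]
      calc ‖x‖ ≤ Real.exp |t| * ‖bC d t x‖ := vec_lower t x
        _ ≤ Real.exp |t| * (1 + ‖bC d t x‖) := by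
            have h := (Real.exp_pos |t|).le
            nlinarith [norm_nonneg (bC d t x), Real.exp_pos |t|]⟩ f

lemma uS_apply (f : SchwartzMap (EuclideanSpace ℝ (Fin d)) ℂ) (t : ℝ)
    (x : EuclideanSpace ℝ (Fin d)) : uS d f t x = f (bC d t x) := rfl

lemma iter_comp (f : SchwartzMap (EuclideanSpace ℝ (Fin d)) ℂ) (t : ℝ)
    (x : EuclideanSpace ℝ (Fin d)) (n : ℕ) :
    iteratedFDeriv ℝ n (⇑(uS d f t)) x =
      (iteratedFDeriv ℝ n (⇑f) (bC d t x)).compContinuousLinearMap (fun _ => bC d t) := by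
  have h : ⇑(uS d f t) = (⇑f) ∘ (⇑(bC d t)) := rfl
  rw [h]
  exact (bC d t).iteratedFDeriv_comp_right (f.smooth ⊤) x (by exact_mod_cast le_top)

lemma expBound (f : SchwartzMap (EuclideanSpace ℝ (Fin d)) ℂ) (t : ℝ) :
    schNorm d L N ⇑(uS d f t - f) ≤
      (2 * (2^(2*N+1) * Ssup L N f)) * Real.exp (((N:ℝ)+L) * |t|) := by
  apply schNorm_le
  intro x n
  set Q : ℝ := 2^(2*N+1) * Ssup L N f with hQdef
  have hQ : 0 ≤ Q := by
    have := Ssup_nonneg (L := L) (N := N) f; positivity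
  have hn : (n:ℕ) ≤ L := Nat.lt_succ_iff.mp n.isLt
  have hE1 : 1 ≤ Real.exp |t| := Real.one_le_exp (abs_nonneg t)
  -- derivative of difference
  have hsub : ⇑(uS d f t - f) = ⇑(uS d f t) + fun y => -(f y) := by
    funext y
    show uS d f t y - f y = uS d f t y + -(f y)
    exact sub_eq_add_neg _ _
  have hDsub : ‖iteratedFDeriv ℝ (n:ℕ) (⇑(uS d f t - f)) x‖ ≤
      ‖iteratedFDeriv ℝ (n:ℕ) (⇑(uS d f t)) x‖ + ‖iteratedFDeriv ℝ (n:ℕ) (⇑f) x‖ := by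
    rw [hsub, iteratedFDeriv_add_apply ((uS d f t).smooth (n:ℕ)).contDiffAt ((f.smooth (n:ℕ)).neg).contDiffAt]
    refine (norm_add_le _ _).trans ?_
    have hneg : iteratedFDeriv ℝ (n:ℕ) (fun y => -(f y)) x =
        -(iteratedFDeriv ℝ (n:ℕ) (⇑f) x) := by
      have h' : (fun y => -(f y)) = -(⇑f) := rfl
      rw [h', iteratedFDeriv_neg_apply]
    rw [hneg, norm_neg]
  -- composed piece
  have h1 : ‖iteratedFDeriv ℝ (n:ℕ) (⇑(uS d f t)) x‖ ≤
      Real.exp ((L:ℝ)*|t|) * ‖iteratedFDeriv ℝ (n:ℕ) (⇑f) (bC d t x)‖ := by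
    rw [iter_comp]
    refine le_trans (ContinuousMultilinearMap.norm_compContinuousLinearMap_le _ _) ?_
    have hprod : (∏ _i : Fin (n:ℕ), ‖bC d t‖) ≤ Real.exp ((L:ℝ)*|t|) := by
      rw [Finset.prod_const, Finset.card_univ, Fintype.card_fin]
      calc ‖bC d t‖^(n:ℕ) ≤ (Real.exp |t|)^(n:ℕ) :=
            pow_le_pow_left₀ (norm_nonneg _) (opNorm_bC_le t) _
        _ ≤ (Real.exp |t|)^L := pow_le_pow_right₀ hE1 hn
        _ = Real.exp ((L:ℝ)*|t|) := by rw [← Real.exp_nat_mul]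
    calc ‖iteratedFDeriv ℝ (n:ℕ) (⇑f) (bC d t x)‖ * (∏ _i : Fin (n:ℕ), ‖bC d t‖)
        ≤ ‖iteratedFDeriv ℝ (n:ℕ) (⇑f) (bC d t x)‖ * Real.exp ((L:ℝ)*|t|) :=
          mul_le_mul_of_nonneg_left hprod (norm_nonneg _)
      _ = Real.exp ((L:ℝ)*|t|) * ‖iteratedFDeriv ℝ (n:ℕ) (⇑f) (bC d t x)‖ := mul_comm _ _
  -- weight transfer
  have hwx : (1:ℝ) + ‖x‖ ≤ Real.exp |t| * (1 + ‖bC d t x‖) := by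
    have h := vec_lower t x
    nlinarith [norm_nonneg (bC d t x)]
  have hw : (1+‖x‖^2) ^ ((N:ℝ)/2) ≤ Real.exp ((N:ℝ)*|t|) * (1+‖bC d t x‖)^N := by
    calc (1+‖x‖^2) ^ ((N:ℝ)/2) ≤ (1+‖x‖)^N := weight_le x
      _ ≤ (Real.exp |t| * (1+‖bC d t x‖))^N := pow_le_pow_left₀ (by positivity) hwx N
      _ = Real.exp ((N:ℝ)*|t|) * (1+‖bC d t x‖)^N := by rw [mul_pow, ← Real.exp_nat_mul]
  have hkey : (1+‖bC d t x‖)^N * ‖iteratedFDeriv ℝ (n:ℕ) (⇑f) (bC d t x)‖ ≤ Q :=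
    key_decay f (by omega) (by omega) (bC d t x)
  have hkey2 : (1+‖x‖)^N * ‖iteratedFDeriv ℝ (n:ℕ) (⇑f) x‖ ≤ Q :=
    key_decay f (by omega) (by omega) x
  have hwp : 0 ≤ (1+‖x‖^2) ^ ((N:ℝ)/2) := weight_nonneg N x
  have hterm1 : (1+‖x‖^2) ^ ((N:ℝ)/2) * ‖iteratedFDeriv ℝ (n:ℕ) (⇑(uS d f t)) x‖ ≤
      Real.exp (((N:ℝ)+L)*|t|) * Q := by
    calc (1+‖x‖^2) ^ ((N:ℝ)/2) * ‖iteratedFDeriv ℝ (n:ℕ) (⇑(uS d f t)) x‖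
        ≤ (Real.exp ((N:ℝ)*|t|) * (1+‖bC d t x‖)^N) *
            (Real.exp ((L:ℝ)*|t|) * ‖iteratedFDeriv ℝ (n:ℕ) (⇑f) (bC d t x)‖) :=
          mul_le_mul hw h1 (norm_nonneg _) (by positivity)
      _ = Real.exp (((N:ℝ)+L)*|t|) *
            ((1+‖bC d t x‖)^N * ‖iteratedFDeriv ℝ (n:ℕ) (⇑f) (bC d t x)‖) := by
          rw [add_mul, Real.exp_add]; ring
      _ ≤ Real.exp (((N:ℝ)+L)*|t|) * Q :=
          mul_le_mul_of_nonneg_left hkey (Real.exp_pos _).le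
  have hterm2 : (1+‖x‖^2) ^ ((N:ℝ)/2) * ‖iteratedFDeriv ℝ (n:ℕ) (⇑f) x‖ ≤
      Real.exp (((N:ℝ)+L)*|t|) * Q := by
    have hEb : 1 ≤ Real.exp (((N:ℝ)+L)*|t|) :=
      Real.one_le_exp (by positivity)
    calc (1+‖x‖^2) ^ ((N:ℝ)/2) * ‖iteratedFDeriv ℝ (n:ℕ) (⇑f) x‖
        ≤ (1+‖x‖)^N * ‖iteratedFDeriv ℝ (n:ℕ) (⇑f) x‖ :=
          mul_le_mul_of_nonneg_right (weight_le x) (norm_nonneg _)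
      _ ≤ Q := hkey2
      _ ≤ Real.exp (((N:ℝ)+L)*|t|) * Q := le_mul_of_one_le_left hQ hEb
  calc (1+‖x‖^2) ^ ((N:ℝ)/2) * ‖iteratedFDeriv ℝ (n:ℕ) (⇑(uS d f t - f)) x‖
      ≤ (1+‖x‖^2) ^ ((N:ℝ)/2) * (‖iteratedFDeriv ℝ (n:ℕ) (⇑(uS d f t)) x‖ +
          ‖iteratedFDeriv ℝ (n:ℕ) (⇑f) x‖) := mul_le_mul_of_nonneg_left hDsub hwp
    _ = (1+‖x‖^2) ^ ((N:ℝ)/2) * ‖iteratedFDeriv ℝ (n:ℕ) (⇑(uS d f t)) x‖ +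
          (1+‖x‖^2) ^ ((N:ℝ)/2) * ‖iteratedFDeriv ℝ (n:ℕ) (⇑f) x‖ := mul_add _ _ _
    _ ≤ Real.exp (((N:ℝ)+L)*|t|) * Q + Real.exp (((N:ℝ)+L)*|t|) * Q := add_le_add hterm1 hterm2
    _ = (2 * Q) * Real.exp (((N:ℝ)+L)*|t|) := by ring

end SchNormAux

namespace SchNormAux

variable {d L N : ℕ}

lemma iter_sub_eq (a b : SchwartzMap (EuclideanSpace ℝ (Fin d)) ℂ)
    (x : EuclideanSpace ℝ (Fin d)) (n : ℕ) :
    iteratedFDeriv ℝ n (⇑(a - b)) x =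
      iteratedFDeriv ℝ n (⇑a) x - iteratedFDeriv ℝ n (⇑b) x := by
  have hsub : ⇑(a - b) = ⇑a + fun y => -(b y) := by
    funext y
    show a y - b y = a y + -(b y)
    exact sub_eq_add_neg _ _
  rw [hsub, iteratedFDeriv_add_apply (a.smooth n).contDiffAt ((b.smooth n).neg).contDiffAt]
  have hneg : iteratedFDeriv ℝ n (fun y => -(b y)) x = -(iteratedFDeriv ℝ n (⇑b) x) := by
    have h' : (fun y => -(b y)) = -(⇑b) := rfl
    rw [h', iteratedFDeriv_neg_apply]
  rw [hneg, ← sub_eq_add_neg]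

lemma lip_iter (f : SchwartzMap (EuclideanSpace ℝ (Fin d)) ℂ) {n : ℕ} (hn : n ≤ L)
    (y z : EuclideanSpace ℝ (Fin d)) :
    ‖iteratedFDeriv ℝ n (⇑f) y - iteratedFDeriv ℝ n (⇑f) z‖ ≤
      (2^(2*N+1) * Ssup L N f) * ‖y - z‖ := by
  have hdiff : ∀ w ∈ (Set.univ : Set (EuclideanSpace ℝ (Fin d))),
      DifferentiableAt ℝ (iteratedFDeriv ℝ n (⇑f)) w := fun w _ =>
    ((f.smooth ⊤).differentiable_iteratedFDeriv
      (by exact_mod_cast (lt_top_iff_ne_top.mpr (by simp) : (n:ℕ∞) < ⊤))).differentiableAt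
  have hbound : ∀ w ∈ (Set.univ : Set (EuclideanSpace ℝ (Fin d))),
      ‖fderiv ℝ (iteratedFDeriv ℝ n (⇑f)) w‖ ≤ 2^(2*N+1) * Ssup L N f := by
    intro w _
    rw [norm_fderiv_iteratedFDeriv]
    have := key_decay (L := L) (N := N) f (k := 0) (by omega) (by omega : n+1 ≤ L+1) w
    simpa using this
  exact convex_univ.norm_image_sub_le_of_norm_fderiv_le hdiff hbound
    (Set.mem_univ z) (Set.mem_univ y)

lemma diffBound (f : SchwartzMap (EuclideanSpace ℝ (Fin d)) ℂ) {T t s : ℝ}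
    (ht : |t| ≤ T) (hs : |s| ≤ T) :
    schNorm d L N ⇑(uS d f t - uS d f s) ≤
      Real.sqrt (((2^(2*N+1) * Ssup L N f) * (L+1) * (Real.exp T)^L) *
        (2 * (2^(2*N+1) * Ssup L N f) * (Real.exp T)^(L+(2*N+1))) *
        ‖bC d t - bC d s‖) := by
  have hT : 0 ≤ T := le_trans (abs_nonneg t) ht
  set Q : ℝ := 2^(2*N+1) * Ssup L N f with hQdef
  have hQ : 0 ≤ Q := by
    have := Ssup_nonneg (L := L) (N := N) f; positivity
  set E : ℝ := Real.exp T with hEdef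
  have hE1 : 1 ≤ E := Real.one_le_exp hT
  have hE0 : 0 < E := Real.exp_pos T
  set CA : ℝ := Q * (L+1) * E^L with hCAdef
  set CB : ℝ := 2 * Q * E^(L+(2*N+1)) with hCBdef
  have hCA : 0 ≤ CA := by positivity
  have hCB : 0 ≤ CB := by positivity
  set δ : ℝ := ‖bC d t - bC d s‖ with hδdef
  have hδ : 0 ≤ δ := norm_nonneg _
  have hEt : ‖bC d t‖ ≤ E := (opNorm_bC_le t).trans (Real.exp_le_exp.mpr ht)
  have hEs : ‖bC d s‖ ≤ E := (opNorm_bC_le s).trans (Real.exp_le_exp.mpr hs)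
  apply schNorm_le
  intro x n
  have hn : (n:ℕ) ≤ L := Nat.lt_succ_iff.mp n.isLt
  set n' : ℕ := (n:ℕ) with hn'def
  set P : ℝ := 1 + ‖x‖ with hPdef
  have hP1 : 1 ≤ P := by simp [hPdef, norm_nonneg]
  have hP0 : 0 < P := lt_of_lt_of_le one_pos hP1
  set Tt := iteratedFDeriv ℝ n' (⇑f) (bC d t x) with hTtdef
  set Ts := iteratedFDeriv ℝ n' (⇑f) (bC d s x) with hTsdef
  set m₁ : Fin n' → (EuclideanSpace ℝ (Fin d) →L[ℝ] EuclideanSpace ℝ (Fin d)) :=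
    fun _ => bC d t with hm₁def
  set m₂ : Fin n' → (EuclideanSpace ℝ (Fin d) →L[ℝ] EuclideanSpace ℝ (Fin d)) :=
    fun _ => bC d s with hm₂def
  have hh : iteratedFDeriv ℝ n' (⇑(uS d f t - uS d f s)) x =
      Tt.compContinuousLinearMap m₁ - Ts.compContinuousLinearMap m₂ := by
    rw [iter_sub_eq, iter_comp, iter_comp]
  -- norm bounds for pi families
  have hm₁n : ‖m₁‖ ≤ E := pi_norm_le_iff_of_nonneg hE0.le |>.mpr fun _ => hEt
  have hm₂n : ‖m₂‖ ≤ E := pi_norm_le_iff_of_nonneg hE0.le |>.mpr fun _ => hEs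
  have hm₁₂ : ‖m₁ - m₂‖ ≤ δ := pi_norm_le_iff_of_nonneg hδ |>.mpr fun _ => le_refl _
  -- decay of Tt, Ts
  have hTtQ : ‖Tt‖ ≤ Q := by
    have := key_decay (L := L) (N := N) f (k := 0) (by omega) (by omega : n' ≤ L+1) (bC d t x)
    simpa using this
  have hTsQ : ‖Ts‖ ≤ Q := by
    have := key_decay (L := L) (N := N) f (k := 0) (by omega) (by omega : n' ≤ L+1) (bC d s x)
    simpa using this
  -- Bound A : Lipschitz-type
  have hEnL : E^n' ≤ E^L := pow_le_pow_right₀ hE1 hn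
  have hA : ‖Tt.compContinuousLinearMap m₁ - Ts.compContinuousLinearMap m₂‖ ≤ CA * δ * P := by
    have hfirst : ‖Tt.compContinuousLinearMap m₁ - Ts.compContinuousLinearMap m₁‖ ≤
        E^L * (Q * (δ * ‖x‖)) := by
      have heq : Tt.compContinuousLinearMap m₁ - Ts.compContinuousLinearMap m₁ =
          (Tt - Ts).compContinuousLinearMap m₁ := by
        rw [← ContinuousMultilinearMap.compContinuousLinearMapL_apply,
          ← ContinuousMultilinearMap.compContinuousLinearMapL_apply,
          ← ContinuousMultilinearMap.compContinuousLinearMapL_apply, map_sub]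
      rw [heq]
      refine le_trans (ContinuousMultilinearMap.norm_compContinuousLinearMap_le _ _) ?_
      have hTtTs : ‖Tt - Ts‖ ≤ Q * (δ * ‖x‖) := by
        refine le_trans (lip_iter (N := N) f hn _ _) ?_
        have : ‖bC d t x - bC d s x‖ ≤ δ * ‖x‖ := by
          have h1 := (bC d t - bC d s).le_opNorm x
          have happ : (bC d t - bC d s) x = bC d t x - bC d s x := rfl
          rw [happ] at h1
          exact h1
        exact mul_le_mul_of_nonneg_left this hQ
      have hprod : (∏ _i : Fin n', ‖m₁ _i‖) ≤ E^L := by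
        have hc : ∀ i : Fin n', ‖m₁ i‖ = ‖bC d t‖ := fun _ => rfl
        rw [Finset.prod_congr rfl (fun i _ => hc i), Finset.prod_const, Finset.card_univ,
          Fintype.card_fin]
        exact le_trans (pow_le_pow_left₀ (norm_nonneg _) hEt n') hEnL
      calc ‖Tt - Ts‖ * ∏ i, ‖m₁ i‖ ≤ (Q * (δ * ‖x‖)) * E^L := by
            apply mul_le_mul hTtTs hprod (Finset.prod_nonneg fun _ _ => norm_nonneg _)
              (by positivity)
        _ = E^L * (Q * (δ * ‖x‖)) := mul_comm _ _
    have hsecond : ‖Ts.compContinuousLinearMap m₁ - Ts.compContinuousLinearMap m₂‖ ≤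
        ((L+1) * E^L * δ) * Q := by
      set CM := ContinuousMultilinearMap.compContinuousLinearMapContinuousMultilinear ℝ
        (fun _ : Fin n' => EuclideanSpace ℝ (Fin d))
        (fun _ : Fin n' => EuclideanSpace ℝ (Fin d)) ℂ with hCMdef
      have hCMn : ‖CM‖ ≤ 1 := MultilinearMap.mkContinuous_norm_le _ zero_le_one _
      have happ : ∀ m : Fin n' → (EuclideanSpace ℝ (Fin d) →L[ℝ] EuclideanSpace ℝ (Fin d)),
          CM m = ContinuousMultilinearMap.compContinuousLinearMapL m := fun _ => rfl
      have himg := CM.norm_image_sub_le m₁ m₂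
      rw [Fintype.card_fin] at himg
      have hmax : max ‖m₁‖ ‖m₂‖ ≤ E := max_le hm₁n hm₂n
      have hmaxpow : (max ‖m₁‖ ‖m₂‖)^(n'-1) ≤ E^L :=
        le_trans (pow_le_pow_left₀ (le_max_iff.mpr (Or.inl (norm_nonneg _))) hmax _)
          (pow_le_pow_right₀ hE1 (by omega))
      have hCMdiff : ‖CM m₁ - CM m₂‖ ≤ (L+1) * E^L * δ := by
        refine le_trans himg ?_
        have hn'L : (n' : ℝ) ≤ (L+1 : ℝ) := by exact_mod_cast Nat.le_succ_of_le hn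
        calc ‖CM‖ * n' * (max ‖m₁‖ ‖m₂‖)^(n'-1) * ‖m₁ - m₂‖ ≤ 1 * (L+1) * E^L * δ := by
              apply mul_le_mul _ hm₁₂ (norm_nonneg _) (by positivity)
              apply mul_le_mul _ hmaxpow (by positivity) (by positivity)
              apply mul_le_mul hCMn hn'L (by positivity) zero_le_one
          _ = (L+1) * E^L * δ := by ring
      calc ‖Ts.compContinuousLinearMap m₁ - Ts.compContinuousLinearMap m₂‖
          = ‖(CM m₁ - CM m₂) Ts‖ := by
            rw [ContinuousLinearMap.sub_apply, happ, happ,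
              ContinuousMultilinearMap.compContinuousLinearMapL_apply,
              ContinuousMultilinearMap.compContinuousLinearMapL_apply]
        _ ≤ ‖CM m₁ - CM m₂‖ * ‖Ts‖ := (CM m₁ - CM m₂).le_opNorm Ts
        _ ≤ ((L+1) * E^L * δ) * Q := by
            apply mul_le_mul hCMdiff hTsQ (norm_nonneg _) (by positivity)
    calc ‖Tt.compContinuousLinearMap m₁ - Ts.compContinuousLinearMap m₂‖
        ≤ ‖Tt.compContinuousLinearMap m₁ - Ts.compContinuousLinearMap m₁‖ +
          ‖Ts.compContinuousLinearMap m₁ - Ts.compContinuousLinearMap m₂‖ := by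
          have := norm_sub_le_norm_sub_add_norm_sub (Tt.compContinuousLinearMap m₁)
            (Ts.compContinuousLinearMap m₁) (Ts.compContinuousLinearMap m₂)
          exact this
      _ ≤ E^L * (Q * (δ * ‖x‖)) + ((L+1) * E^L * δ) * Q := add_le_add hfirst hsecond
      _ ≤ CA * δ * P := by
          rw [hCAdef, hPdef]
          have hx0 : 0 ≤ ‖x‖ := norm_nonneg x
          have hEL : 0 ≤ E^L := by positivity
          nlinarith [mul_nonneg (mul_nonneg hQ hδ) hEL, mul_nonneg hQ hδ,
            mul_nonneg (mul_nonneg (mul_nonneg hQ hδ) hEL) hx0]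
  -- Bound B : decay
  have hB : P^(2*N+1) * ‖Tt.compContinuousLinearMap m₁ - Ts.compContinuousLinearMap m₂‖ ≤ CB := by
    have hwt : P ≤ E * (1 + ‖bC d t x‖) := by
      have h := vec_lower t x
      have h2 : ‖x‖ ≤ E * ‖bC d t x‖ :=
        le_trans h (mul_le_mul_of_nonneg_right ((Real.exp_le_exp.mpr ht)) (norm_nonneg _))
      rw [hPdef]; nlinarith [norm_nonneg (bC d t x)]
    have hws : P ≤ E * (1 + ‖bC d s x‖) := by
      have h := vec_lower s x
      have h2 : ‖x‖ ≤ E * ‖bC d s x‖ :=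
        le_trans h (mul_le_mul_of_nonneg_right ((Real.exp_le_exp.mpr hs)) (norm_nonneg _))
      rw [hPdef]; nlinarith [norm_nonneg (bC d s x)]
    have hdect : P^(2*N+1) * ‖Tt‖ ≤ E^(2*N+1) * Q := by
      calc P^(2*N+1) * ‖Tt‖ ≤ (E * (1 + ‖bC d t x‖))^(2*N+1) * ‖Tt‖ :=
            mul_le_mul_of_nonneg_right (pow_le_pow_left₀ (by positivity) hwt _) (norm_nonneg _)
        _ = E^(2*N+1) * ((1 + ‖bC d t x‖)^(2*N+1) * ‖Tt‖) := by rw [mul_pow]; ring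
        _ ≤ E^(2*N+1) * Q := by
            apply mul_le_mul_of_nonneg_left _ (by positivity)
            exact key_decay f (by omega) (by omega : n' ≤ L+1) (bC d t x)
    have hdecs : P^(2*N+1) * ‖Ts‖ ≤ E^(2*N+1) * Q := by
      calc P^(2*N+1) * ‖Ts‖ ≤ (E * (1 + ‖bC d s x‖))^(2*N+1) * ‖Ts‖ :=
            mul_le_mul_of_nonneg_right (pow_le_pow_left₀ (by positivity) hws _) (norm_nonneg _)
        _ = E^(2*N+1) * ((1 + ‖bC d s x‖)^(2*N+1) * ‖Ts‖) := by rw [mul_pow]; ring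
        _ ≤ E^(2*N+1) * Q := by
            apply mul_le_mul_of_nonneg_left _ (by positivity)
            exact key_decay f (by omega) (by omega : n' ≤ L+1) (bC d s x)
    have hnrm : ‖Tt.compContinuousLinearMap m₁ - Ts.compContinuousLinearMap m₂‖ ≤
        E^L * (‖Tt‖ + ‖Ts‖) := by
      refine le_trans (norm_sub_le _ _) ?_
      have h₁ : ‖Tt.compContinuousLinearMap m₁‖ ≤ E^L * ‖Tt‖ := by
        refine le_trans (ContinuousMultilinearMap.norm_compContinuousLinearMap_le _ _) ?_
        have hprod : (∏ _i : Fin n', ‖m₁ _i‖) ≤ E^L := by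
          have hc : ∀ i : Fin n', ‖m₁ i‖ = ‖bC d t‖ := fun _ => rfl
          rw [Finset.prod_congr rfl (fun i _ => hc i), Finset.prod_const, Finset.card_univ,
            Fintype.card_fin]
          exact le_trans (pow_le_pow_left₀ (norm_nonneg _) hEt n') hEnL
        calc ‖Tt‖ * ∏ i, ‖m₁ i‖ ≤ ‖Tt‖ * E^L :=
              mul_le_mul_of_nonneg_left hprod (norm_nonneg _)
          _ = E^L * ‖Tt‖ := mul_comm _ _
      have h₂ : ‖Ts.compContinuousLinearMap m₂‖ ≤ E^L * ‖Ts‖ := by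
        refine le_trans (ContinuousMultilinearMap.norm_compContinuousLinearMap_le _ _) ?_
        have hprod : (∏ _i : Fin n', ‖m₂ _i‖) ≤ E^L := by
          have hc : ∀ i : Fin n', ‖m₂ i‖ = ‖bC d s‖ := fun _ => rfl
          rw [Finset.prod_congr rfl (fun i _ => hc i), Finset.prod_const, Finset.card_univ,
            Fintype.card_fin]
          exact le_trans (pow_le_pow_left₀ (norm_nonneg _) hEs n') hEnL
        calc ‖Ts‖ * ∏ i, ‖m₂ i‖ ≤ ‖Ts‖ * E^L :=
              mul_le_mul_of_nonneg_left hprod (norm_nonneg _)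
          _ = E^L * ‖Ts‖ := mul_comm _ _
      calc ‖Tt.compContinuousLinearMap m₁‖ + ‖Ts.compContinuousLinearMap m₂‖
          ≤ E^L * ‖Tt‖ + E^L * ‖Ts‖ := add_le_add h₁ h₂
        _ = E^L * (‖Tt‖ + ‖Ts‖) := by ring
    calc P^(2*N+1) * ‖Tt.compContinuousLinearMap m₁ - Ts.compContinuousLinearMap m₂‖
        ≤ P^(2*N+1) * (E^L * (‖Tt‖ + ‖Ts‖)) :=
          mul_le_mul_of_nonneg_left hnrm (by positivity)
      _ = E^L * (P^(2*N+1) * ‖Tt‖ + P^(2*N+1) * ‖Ts‖) := by ring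
      _ ≤ E^L * (E^(2*N+1) * Q + E^(2*N+1) * Q) :=
          mul_le_mul_of_nonneg_left (add_le_add hdect hdecs) (by positivity)
      _ = CB := by rw [hCBdef, pow_add]; ring
  -- combine
  rw [hh]
  set h : ℝ := ‖Tt.compContinuousLinearMap m₁ - Ts.compContinuousLinearMap m₂‖ with hhdef
  have hh0 : 0 ≤ h := norm_nonneg _
  have hfin : P^N * h ≤ Real.sqrt (CA * CB * δ) := by
    apply Real.le_sqrt_of_sq_le
    have hsq : (P^N * h)^2 * P ≤ (CA * CB * δ) * P :=
      calc (P^N * h)^2 * P = (P^(2*N+1) * h) * h := by ring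
        _ ≤ CB * (CA * δ * P) := mul_le_mul hB hA hh0 hCB
        _ = (CA * CB * δ) * P := by ring
    exact le_of_mul_le_mul_right hsq hP0
  calc (1+‖x‖^2) ^ ((N:ℝ)/2) * h ≤ P^N * h :=
        mul_le_mul_of_nonneg_right (weight_le x) hh0
    _ ≤ Real.sqrt (CA * CB * δ) := hfin

end SchNormAux

namespace SchNormAux

variable {d L N : ℕ}

lemma schNorm_tri' (f : SchwartzMap (EuclideanSpace ℝ (Fin d)) ℂ) (τ σ : ℝ) :
    schNorm d L N ⇑(uS d f τ - f) - schNorm d L N ⇑(uS d f σ - f) ≤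
      schNorm d L N ⇑(uS d f τ - uS d f σ) := by
  have h1 := schNorm_tri (L := L) (N := N) (uS d f τ - f) (uS d f σ - f)
  rw [sub_sub_sub_cancel_right] at h1
  linarith

lemma cB2_symm (τ σ : ℝ) : cB2 σ τ = cB2 τ σ := by
  unfold cB2; rw [abs_sub_comm, abs_sub_comm (Real.sinh σ)]

lemma psi_cont (f : SchwartzMap (EuclideanSpace ℝ (Fin d)) ℂ) :
    Continuous (fun τ => schNorm d L N ⇑(uS d f τ - f)) := by
  rw [continuous_iff_continuousAt]
  intro σ
  set T : ℝ := |σ| + 1 with hTdef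
  set CC : ℝ := ((2^(2*N+1) * Ssup L N f) * (L+1) * (Real.exp T)^L) *
      (2 * (2^(2*N+1) * Ssup L N f) * (Real.exp T)^(L+(2*N+1))) with hCCdef
  have hCC0 : 0 ≤ CC := by
    have := Ssup_nonneg (L := L) (N := N) f
    positivity
  have hbound : ∀ τ, |τ - σ| ≤ 1 →
      |schNorm d L N ⇑(uS d f τ - f) - schNorm d L N ⇑(uS d f σ - f)| ≤
        Real.sqrt (CC * cB2 τ σ) := by
    intro τ hτ
    have hτT : |τ| ≤ T := by
      calc |τ| = |σ + (τ - σ)| := by ring_nf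
        _ ≤ |σ| + |τ - σ| := abs_add_le _ _
        _ ≤ T := by rw [hTdef]; linarith
    have hσT : |σ| ≤ T := by rw [hTdef]; linarith
    rw [abs_sub_le_iff]
    constructor
    · refine (schNorm_tri' f τ σ).trans ?_
      refine (diffBound f hτT hσT).trans ?_
      apply Real.sqrt_le_sqrt
      rw [← hCCdef]
      exact mul_le_mul_of_nonneg_left (opNorm_bC_sub_le τ σ) hCC0
    · refine (schNorm_tri' f σ τ).trans ?_
      refine (diffBound f hσT hτT).trans ?_
      apply Real.sqrt_le_sqrt
      rw [← hCCdef, ← cB2_symm τ σ]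
      exact mul_le_mul_of_nonneg_left (opNorm_bC_sub_le σ τ) hCC0
  have hg : Filter.Tendsto (fun τ => Real.sqrt (CC * cB2 τ σ)) (nhds σ) (nhds 0) := by
    have hcont : Continuous fun τ => Real.sqrt (CC * cB2 τ σ) := by
      apply Real.continuous_sqrt.comp
      apply continuous_const.mul
      unfold cB2
      exact continuous_const.mul ((Real.continuous_cosh.sub continuous_const).abs.add
        ((Real.continuous_sinh.sub continuous_const).abs))
    have hval : Real.sqrt (CC * cB2 σ σ) = 0 := by unfold cB2; simp
    have h := hcont.continuousAt (x := σ)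
    rw [ContinuousAt, hval] at h
    exact h
  have habs : Filter.Tendsto
      (fun τ => |schNorm d L N ⇑(uS d f τ - f) - schNorm d L N ⇑(uS d f σ - f)|)
      (nhds σ) (nhds 0) := by
    have hev : ∀ᶠ τ in nhds σ, |τ - σ| ≤ 1 := by
      have hmem := Metric.closedBall_mem_nhds σ (one_pos)
      filter_upwards [hmem] with τ hτ
      rwa [Metric.mem_closedBall, Real.dist_eq] at hτ
    refine squeeze_zero' (Filter.Eventually.of_forall fun τ => abs_nonneg _) ?_ hg
    filter_upwards [hev] with τ h using hbound τ h
  rw [ContinuousAt, tendsto_iff_dist_tendsto_zero]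
  simpa [Real.dist_eq] using habs

end SchNormAux


open SchNormAux

/-- The map `t ↦ ‖α_t(f) − f‖_{L,N}` is continuous and exponentially bounded. -/
theorem schNorm_boost_diff_continuous_expBounded (d : ℕ)
    (f : SchwartzMap (EuclideanSpace ℝ (Fin d)) ℂ) (L N : ℕ) :
    Continuous (fun t : ℝ => schNorm d L N (fun x => f (boostVec d (-t) x) - f x)) ∧
      ∃ C M : ℝ, 0 < C ∧ 0 < M ∧ ∀ t : ℝ,
        schNorm d L N (fun x => f (boostVec d (-t) x) - f x) ≤ C * Real.exp (M * |t|) := by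
  have hfun : ∀ t : ℝ, (fun x => f (boostVec d (-t) x) - f x) = ⇑(uS d f (-t) - f) := by
    intro t
    funext x
    show f (boostVec d (-t) x) - f x = uS d f (-t) x - f x
    rw [uS_apply, bC_eq_boostVec]
  have hrw : (fun t : ℝ => schNorm d L N (fun x => f (boostVec d (-t) x) - f x)) =
      (fun τ => schNorm d L N ⇑(uS d f τ - f)) ∘ (fun t : ℝ => -t) := by
    funext t
    simp only [Function.comp_apply]
    rw [hfun t]
  constructor
  · rw [hrw]
    exact (psi_cont f).comp continuous_neg
  · set Q : ℝ := 2^(2*N+1) * Ssup L N f with hQdef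
    have hQ : 0 ≤ Q := by
      have := Ssup_nonneg (L := L) (N := N) f
      positivity
    refine ⟨2*Q + 1, (N:ℝ) + L + 1, by positivity, by positivity, fun t => ?_⟩
    rw [hfun t]
    refine (expBound f (-t)).trans ?_
    rw [abs_neg]
    have h1 : Real.exp (((N:ℝ)+L) * |t|) ≤ Real.exp ((((N:ℝ)+L+1)) * |t|) := by
      apply Real.exp_le_exp.mpr
      nlinarith [abs_nonneg t]
    calc 2*Q * Real.exp (((N:ℝ)+L) * |t|) ≤ (2*Q+1) * Real.exp ((((N:ℝ)+L+1)) * |t|) := by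
          apply mul_le_mul (by linarith) h1 (Real.exp_pos _).le (by linarith)
      _ = (2*Q+1) * Real.exp ((((N:ℝ)+L+1)) * |t|) := rfl
end

section
/- Let H be a Hilbert space, η a metric operator with ηΩ = Ω, ⟨·,·⟩ = (·, η·), and suppose a collection of vectors {Φ_g} (the spectrally cut-off states) satisfies (Ω, Φ_g) = 0 and spans a dense subspace of the orthogonal complement of Ω in H. If Ω̃ ∈ H satisfies ⟨Ω̃, Φ_g⟩ = ⟨Ω̃, Ω⟩⟨Ω, Φ_g⟩-type translation-invariance relations forcing (Ω̃, ηΦ_g) = 0 for all g, and η is self-adjoint with ηΩ = Ω, then Ω̃ = cΩ for some c ∈ ℂ. -/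
/-- Uniqueness of the vacuum: if the vectors `Φ g` are orthogonal to `Ω`, span a dense
subspace of the orthogonal complement of `Ω`, and a vector `Ω̃` is orthogonal to all
`η Φ g`, where `η` is a metric operator fixing `Ω`, then `Ω̃` is proportional to `Ω`. -/
theorem vacuum_unique
    {H : Type*} [NormedAddCommGroup H] [InnerProductSpace ℂ H] [CompleteSpace H]
    (η : H →L[ℂ] H) (hη : IsSelfAdjoint η) (hη2 : ∀ v, η (η v) = v)
    (Ω : H) (hΩnorm : ‖Ω‖ = 1) (hηΩ : η Ω = Ω)
    {ι : Type*} (Φ : ι → H)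
    (horth : ∀ g : ι, (inner ℂ Ω (Φ g) : ℂ) = 0)
    (hdense : (ℂ ∙ Ω)ᗮ ≤ (Submodule.span ℂ (Set.range Φ)).topologicalClosure)
    (Ω' : H) (hΩ' : ∀ g : ι, (inner ℂ Ω' (η (Φ g)) : ℂ) = 0) :
    ∃ c : ℂ, Ω' = c • Ω := by
  set K : Submodule ℂ H := Submodule.span ℂ (Set.range Φ) with hK
  set a : ℂ := inner ℂ Ω (η Ω') with ha
  set v : H := η Ω' - a • Ω with hv
  have hΩΩ : (inner ℂ Ω Ω : ℂ) = 1 := by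
    rw [inner_self_eq_norm_sq_to_K, hΩnorm]; norm_num
  -- v lies in the orthogonal complement of Ω
  have hvmem : v ∈ (ℂ ∙ Ω)ᗮ := by
    rw [Submodule.mem_orthogonal_singleton_iff_inner_right, hv, inner_sub_right,
      inner_smul_right, hΩΩ, mul_one, ha, sub_self]
  -- η Ω' is orthogonal to the span of the Φ g
  have hsym := hη.isSymmetric
  have hmemK : η Ω' ∈ Kᗮ := by
    rw [Submodule.mem_orthogonal']
    intro u hu
    induction hu using Submodule.span_induction with
    | mem x hx =>
        obtain ⟨g, rfl⟩ := hx
        calc (inner ℂ (η Ω') (Φ g) : ℂ) = inner ℂ Ω' (η (Φ g)) := by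
              simpa using hsym Ω' (Φ g)
          _ = 0 := hΩ' g
    | zero => simp
    | add x y _ _ hx hy => rw [inner_add_right, hx, hy, add_zero]
    | smul c x _ hx => rw [inner_smul_right, hx, mul_zero]
  -- v lies in the closure of the span, i.e. in Kᗮᗮ
  have hvK : v ∈ Kᗮᗮ := by
    rw [Submodule.orthogonal_orthogonal_eq_closure]
    exact hdense hvmem
  -- hence ⟪η Ω', v⟫ = 0
  have h0 : (inner ℂ (η Ω') v : ℂ) = 0 :=
    (Submodule.mem_orthogonal _ v).mp hvK _ hmemK
  -- compute: ⟪η Ω', v⟫ = ⟪v, v⟫ since v ⊥ Ω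
  have hΩv : (inner ℂ Ω v : ℂ) = 0 :=
    Submodule.mem_orthogonal_singleton_iff_inner_right.mp hvmem
  have hvv : (inner ℂ v v : ℂ) = 0 := by
    have : (inner ℂ (η Ω') v : ℂ) = inner ℂ (v + a • Ω) v := by rw [hv]; simp
    rw [this, inner_add_left, inner_smul_left, hΩv, mul_zero, add_zero] at h0
    exact h0
  have hv0 : v = 0 := inner_self_eq_zero.mp hvv
  -- so η Ω' = a • Ω, and applying η gives Ω' = a • Ω
  have hηΩ' : η Ω' = a • Ω := sub_eq_zero.mp hv0
  refine ⟨a, ?_⟩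
  have := congrArg η hηΩ'
  rw [hη2, map_smul, hηΩ] at this
  exact this
end

section
/- Let η₂ be a bounded self-adjoint operator on a Hilbert space (H₂, (·,·)₂) with ker η₂ = 0, and define (·,·) = (·, |η₂|·)₂ and η = sign(η₂) (via the polar decomposition η₂ = η|η₂|). Then η is self-adjoint with η² = 1 on the completion H of H₂ with respect to (·,·), and ⟨u,v⟩ := (u, η₂ v)₂ = (u, η v) for all u, v ∈ H₂; moreover |⟨u,v⟩| ≤ ‖u‖·‖v‖ in the new norm. -/
set_option maxHeartbeats 2000000
set_option synthInstance.maxHeartbeats 1000000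

open Filter Topology ContinuousLinearMap

/-- Construction of a Krein space structure from an injective bounded self-adjoint
Gram operator `η₂`: with `a = |η₂|` (self-adjoint, positive, `a² = η₂²`), there is a
linear map `η = sign(η₂)` satisfying `η₂ = η ∘ a`, `η² = 1`, `η` is self-adjoint for
the new inner ℂ product `(u,v) = (u, a v)₂`, the form `⟨u,v⟩ = (u, η₂ v)₂` equals
`(u, η v)`, and `|⟨u,v⟩| ≤ ‖u‖ ‖v‖` in the new norm. -/
theorem krein_from_gram_operator
    {H : Type*} [NormedAddCommGroup H] [InnerProductSpace ℂ H] [CompleteSpace H]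
    (η₂ a : H →L[ℂ] H)
    (hη₂ : IsSelfAdjoint η₂) (hinj : Function.Injective η₂)
    (ha : IsSelfAdjoint a)
    (hapos : ∀ v : H, 0 ≤ ((inner ℂ v (a v) : ℂ)).re)
    (hsq : ∀ v : H, a (a v) = η₂ (η₂ v)) :
    ∃ η : H →ₗ[ℂ] H,
      (∀ v : H, η (a v) = η₂ v) ∧
      (∀ v : H, η (η v) = v) ∧
      (∀ u v : H, (inner ℂ (η u) (a v) : ℂ) = inner ℂ u (a (η v))) ∧
      (∀ u v : H, (inner ℂ u (η₂ v) : ℂ) = inner ℂ u (a (η v))) ∧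
      (∀ u v : H, ‖(inner ℂ u (η₂ v) : ℂ)‖ ≤
        Real.sqrt ((inner ℂ u (a u) : ℂ)).re * Real.sqrt ((inner ℂ v (a v) : ℂ)).re) := by
  classical
  -- `a` is a positive operator
  have ha0 : (0 : H →L[ℂ] H) ≤ a := by
    rw [ContinuousLinearMap.nonneg_iff_isPositive]
    refine ⟨ha.isSymmetric, fun x => ?_⟩
    have h1 : ((inner ℂ (a x) x : ℂ)).re = ((inner ℂ x (a x) : ℂ)).re := by
      have := inner_re_symm (𝕜 := ℂ) (a x) x
      simpa using this
    have h2 : 0 ≤ ((inner ℂ (a x) x : ℂ)).re := h1 ▸ hapos x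
    simpa [ContinuousLinearMap.reApplyInnerSelf] using h2
  have hsq' : a * a = η₂ * η₂ := by
    ext v; simpa [ContinuousLinearMap.mul_apply] using hsq v
  -- kernel of `a` is trivial
  have hker : ∀ x : H, a x = 0 → x = 0 := by
    intro x hx
    have h1 : η₂ (η₂ x) = 0 := by rw [← hsq x, hx, map_zero]
    have h2 : η₂ x = 0 := hinj (by simpa using h1)
    exact hinj (by simpa using h2)
  -- `a = |η₂|` via the continuous functional calculus
  have hacfc : a = cfc (fun t : ℝ => |t|) η₂ := by
    have hb0 : (0 : H →L[ℂ] H) ≤ cfc (fun t : ℝ => |t|) η₂ :=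
      cfc_nonneg (fun t _ => abs_nonneg t)
    have hbb : cfc (fun t : ℝ => |t|) η₂ * cfc (fun t : ℝ => |t|) η₂ = η₂ * η₂ := by
      rw [← cfc_mul (fun t : ℝ => |t|) (fun t : ℝ => |t|) η₂
        continuous_abs.continuousOn continuous_abs.continuousOn]
      rw [show (fun t : ℝ => |t| * |t|) = fun t : ℝ => t * t from
        funext fun t => abs_mul_abs_self t]
      rw [cfc_mul (fun t : ℝ => t) (fun t : ℝ => t) η₂
        continuous_id.continuousOn continuous_id.continuousOn, cfc_id' ℝ η₂]
    calc a = CFC.sqrt (a * a) := (CFC.sqrt_mul_self a ha0).symm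
      _ = CFC.sqrt (cfc (fun t : ℝ => |t|) η₂ * cfc (fun t : ℝ => |t|) η₂) := by
            rw [hsq', hbb]
      _ = cfc (fun t : ℝ => |t|) η₂ := CFC.sqrt_mul_self _ hb0
  -- the approximating sequence
  set c : ℕ → ℝ := fun n => ((n : ℝ) + 1)⁻¹ with hc_def
  have hc : ∀ n, 0 < c n := fun n => by positivity
  have hc0 : Tendsto c atTop (𝓝 0) := by
    simpa [hc_def, one_div] using tendsto_one_div_add_atTop_nhds_zero_nat (𝕜 := ℝ)
  set f : ℕ → ℝ → ℝ := fun n t => t / (|t| + c n) with hf_def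
  have hden : ∀ n (t : ℝ), 0 < |t| + c n := fun n t => by positivity
  have hfc : ∀ n, Continuous (f n) := fun n =>
    continuous_id.div (continuous_abs.add continuous_const) (fun t => (hden n t).ne')
  set S : ℕ → H →L[ℂ] H := fun n => cfc (f n) η₂ with hS_def
  have hSsa : ∀ n, IsSelfAdjoint (S n) := fun n => cfc_predicate (f n) η₂
  have hSsymm : ∀ n (x y : H), (inner ℂ (S n x) y : ℂ) = inner ℂ x (S n y) := fun n x y => by
    simpa using (hSsa n).isSymmetric x y
  have hSnorm : ∀ n, ‖S n‖ ≤ 1 := by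
    intro n
    refine norm_cfc_le zero_le_one fun t _ => ?_
    rw [Real.norm_eq_abs, hf_def, abs_div, abs_of_pos (hden n t)]
    rw [div_le_one (hden n t)]
    linarith [(hc n)]
  have hSx : ∀ n (x : H), ‖S n x‖ ≤ ‖x‖ := fun n x =>
    ((S n).le_opNorm x).trans (by
      simpa using mul_le_mul_of_nonneg_right (hSnorm n) (norm_nonneg x))
  -- commutation with `a`
  have hcomm : ∀ n, S n * a = a * S n := by
    intro n
    rw [hacfc, hS_def]
    rw [← cfc_mul (f n) (fun t : ℝ => |t|) η₂ (hfc n).continuousOn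
      continuous_abs.continuousOn]
    rw [← cfc_mul (fun t : ℝ => |t|) (f n) η₂ continuous_abs.continuousOn
      (hfc n).continuousOn]
    exact cfc_congr fun t _ => mul_comm _ _
  -- key norm estimates
  have hK1 : ∀ n, ‖S n * a - η₂‖ ≤ c n := by
    intro n
    have e1 : S n * a = cfc (fun t : ℝ => f n t * |t|) η₂ := by
      rw [hacfc, hS_def, ← cfc_mul (f n) (fun t : ℝ => |t|) η₂ (hfc n).continuousOn
        continuous_abs.continuousOn]
    have e2 : S n * a - η₂ = cfc (fun t : ℝ => f n t * |t| - t) η₂ := by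
      rw [cfc_sub (fun t : ℝ => f n t * |t|) (fun t : ℝ => t) η₂
        (((hfc n).mul continuous_abs).continuousOn) continuous_id.continuousOn,
        ← e1, cfc_id' ℝ η₂]
    rw [e2]
    refine norm_cfc_le (hc n).le fun t _ => ?_
    have hid : f n t * |t| - t = -(t * c n) / (|t| + c n) := by
      rw [hf_def]
      have := (hden n t).ne'
      field_simp
      ring
    rw [Real.norm_eq_abs, hid, abs_div, abs_of_pos (hden n t), abs_neg, abs_mul,
      abs_of_pos (hc n), div_le_iff₀ (hden n t)]
    nlinarith [abs_nonneg t, hc n]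
  have hK2 : ∀ n, ‖S n * η₂ - a‖ ≤ c n := by
    intro n
    have e1 : S n * η₂ = cfc (fun t : ℝ => f n t * t) η₂ := by
      rw [cfc_mul (f n) (fun t : ℝ => t) η₂ (hfc n).continuousOn
        continuous_id.continuousOn, cfc_id' ℝ η₂]
    have e2 : S n * η₂ - a = cfc (fun t : ℝ => f n t * t - |t|) η₂ := by
      rw [cfc_sub (fun t : ℝ => f n t * t) (fun t : ℝ => |t|) η₂
        (((hfc n).mul continuous_id).continuousOn) continuous_abs.continuousOn,
        ← e1, ← hacfc]
    rw [e2]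
    refine norm_cfc_le (hc n).le fun t _ => ?_
    have htt : t * t = |t| * |t| := (abs_mul_abs_self t).symm
    have hid : f n t * t - |t| = -(|t| * c n) / (|t| + c n) := by
      rw [hf_def]
      have := (hden n t).ne'
      field_simp
      nlinarith [htt]
    rw [Real.norm_eq_abs, hid, abs_div, abs_of_pos (hden n t), abs_neg, abs_mul,
      abs_of_nonneg (abs_nonneg t), abs_of_pos (hc n), div_le_iff₀ (hden n t)]
    nlinarith [abs_nonneg t, hc n]
  -- pointwise estimates
  have hb1 : ∀ n (v : H), ‖S n (a v) - η₂ v‖ ≤ c n * ‖v‖ := by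
    intro n v
    have : S n (a v) - η₂ v = (S n * a - η₂) v := by
      simp [ContinuousLinearMap.mul_apply, ContinuousLinearMap.sub_apply]
    rw [this]
    exact ((S n * a - η₂).le_opNorm v).trans
      (mul_le_mul_of_nonneg_right (hK1 n) (norm_nonneg v))
  have hb2 : ∀ n (v : H), ‖S n (η₂ v) - a v‖ ≤ c n * ‖v‖ := by
    intro n v
    have : S n (η₂ v) - a v = (S n * η₂ - a) v := by
      simp [ContinuousLinearMap.mul_apply, ContinuousLinearMap.sub_apply]
    rw [this]
    exact ((S n * η₂ - a).le_opNorm v).trans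
      (mul_le_mul_of_nonneg_right (hK2 n) (norm_nonneg v))
  have hcv : ∀ v : H, Tendsto (fun n => c n * ‖v‖) atTop (𝓝 0) := fun v => by
    simpa using hc0.mul_const ‖v‖
  have htend1 : ∀ v : H, Tendsto (fun n => S n (a v)) atTop (𝓝 (η₂ v)) := by
    intro v
    rw [tendsto_iff_norm_sub_tendsto_zero]
    exact squeeze_zero_norm (fun n => by simpa using hb1 n v) (hcv v)
  have htend2 : ∀ v : H, Tendsto (fun n => S n (η₂ v)) atTop (𝓝 (a v)) := by
    intro v
    rw [tendsto_iff_norm_sub_tendsto_zero]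
    exact squeeze_zero_norm (fun n => by simpa using hb2 n v) (hcv v)
  -- density of the range of `a`
  have hdense : Dense (Set.range fun v : H => a v) := by
    have horth : (LinearMap.range (a : H →ₗ[ℂ] H))ᗮ = ⊥ := by
      rw [Submodule.eq_bot_iff]
      intro x hx
      rw [Submodule.mem_orthogonal] at hx
      have h1 : ∀ v : H, (inner ℂ (a v) x : ℂ) = 0 := fun v =>
        hx (a v) (LinearMap.mem_range.mpr ⟨v, rfl⟩)
      have h2 : (inner ℂ (a x) (a x) : ℂ) = 0 := by
        have h3 := h1 (a x)
        have h4 : (inner ℂ (a (a x)) x : ℂ) = inner ℂ (a x) (a x) := by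
          simpa using ha.isSymmetric (a x) x
        rwa [h4] at h3
      exact hker x (inner_self_eq_zero.mp h2)
    have htop : (LinearMap.range (a : H →ₗ[ℂ] H)).topologicalClosure = ⊤ :=
      Submodule.topologicalClosure_eq_top_iff.mpr horth
    have : Dense ((LinearMap.range (a : H →ₗ[ℂ] H) : Submodule ℂ H) : Set H) := by
      rw [dense_iff_closure_eq, ← Submodule.topologicalClosure_coe, htop]
      rfl
    convert this using 1
    ext y; simp
  -- construction of the strong limit
  have hconv : ∀ x : H, ∃ l : H, Tendsto (fun n => S n x) atTop (𝓝 l) := by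
    intro x
    refine cauchySeq_tendsto_of_complete ?_
    rw [Metric.cauchySeq_iff]
    intro ε hε
    obtain ⟨y, ⟨v, rfl⟩, hxy⟩ :=
      Metric.mem_closure_iff.mp (hdense x) (ε / 4) (by linarith)
    obtain ⟨N, hN⟩ := (eventually_atTop.mp
      ((hcv v).eventually (eventually_lt_nhds (show (0:ℝ) < ε / 8 by linarith))))
    refine ⟨N, fun m hm n hn => ?_⟩
    rw [dist_eq_norm]
    have hdec : S m x - S n x =
        S m (x - a v) + (S m (a v) - η₂ v) + (η₂ v - S n (a v)) + S n (a v - x) := by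
      rw [map_sub, map_sub]; abel
    have h1 : ‖S m (x - a v)‖ ≤ ε / 4 := (hSx m _).trans (by
      rw [← dist_eq_norm]; exact hxy.le)
    have h4 : ‖S n (a v - x)‖ ≤ ε / 4 := (hSx n _).trans (by
      rw [← dist_eq_norm, dist_comm]; exact hxy.le)
    have h2 : ‖S m (a v) - η₂ v‖ < ε / 8 := (hb1 m v).trans_lt (hN m hm)
    have h3 : ‖η₂ v - S n (a v)‖ < ε / 8 := by
      rw [norm_sub_rev]; exact (hb1 n v).trans_lt (hN n hn)
    calc ‖S m x - S n x‖
        ≤ ‖S m (x - a v) + (S m (a v) - η₂ v) + (η₂ v - S n (a v))‖ + ‖S n (a v - x)‖ := by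
          rw [hdec]; exact norm_add_le _ _
      _ ≤ ‖S m (x - a v) + (S m (a v) - η₂ v)‖ + ‖η₂ v - S n (a v)‖ + ‖S n (a v - x)‖ := by
          gcongr; exact norm_add_le _ _
      _ ≤ ‖S m (x - a v)‖ + ‖S m (a v) - η₂ v‖ + ‖η₂ v - S n (a v)‖ + ‖S n (a v - x)‖ := by
          gcongr; exact norm_add_le _ _
      _ < ε := by linarith
  choose F hF using hconv
  -- linearity of the limit
  have Fadd : ∀ x y : H, F (x + y) = F x + F y := fun x y =>
    tendsto_nhds_unique (hF (x + y)) (by simpa [map_add] using (hF x).add (hF y))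
  have Fsub : ∀ x y : H, F (x - y) = F x - F y := fun x y =>
    tendsto_nhds_unique (hF (x - y)) (by simpa [map_sub] using (hF x).sub (hF y))
  have Fsmul : ∀ (z : ℂ) (x : H), F (z • x) = z • F x := fun z x =>
    tendsto_nhds_unique (hF (z • x)) (by simpa [map_smul] using (hF x).const_smul z)
  have hFnorm : ∀ x : H, ‖F x‖ ≤ ‖x‖ := fun x =>
    le_of_tendsto (hF x).norm (Eventually.of_forall fun n => hSx n x)
  have hFcont : Continuous F := by
    have : LipschitzWith 1 F := LipschitzWith.of_dist_le_mul fun x y => by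
      rw [dist_eq_norm, dist_eq_norm, NNReal.coe_one, one_mul, ← Fsub]
      exact hFnorm _
    exact this.continuous
  -- the key identities
  have p1 : ∀ v : H, F (a v) = η₂ v := fun v =>
    tendsto_nhds_unique (hF (a v)) (htend1 v)
  have p1' : ∀ v : H, F (η₂ v) = a v := fun v =>
    tendsto_nhds_unique (hF (η₂ v)) (htend2 v)
  have p2 : ∀ x : H, F (F x) = x := by
    have : (fun x : H => F (F x)) = _root_.id :=
      Continuous.ext_on hdense (hFcont.comp hFcont) continuous_id (by
        rintro y ⟨v, rfl⟩
        show F (F (a v)) = a v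
        rw [p1, p1'])
    exact fun x => congrFun this x
  -- commutation in the limit : a (F v) = F (a v)
  have pcomm : ∀ v : H, a (F v) = η₂ v := by
    intro v
    have h1 : Tendsto (fun n => a (S n v)) atTop (𝓝 (a (F v))) :=
      ((a.continuous.tendsto (F v)).comp (hF v))
    have heq : (fun n => a (S n v)) = fun n => S n (a v) := by
      funext n
      have := congrArg (fun T : H →L[ℂ] H => T v) (hcomm n)
      simpa [ContinuousLinearMap.mul_apply] using this.symm
    rw [heq] at h1
    exact tendsto_nhds_unique h1 (htend1 v)
  -- self-adjointness of the limit w.r.t. the new inner ℂ product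
  have p3 : ∀ u v : H, (inner ℂ (F u) (a v) : ℂ) = inner ℂ u (a (F v)) := by
    intro u v
    have hterm : ∀ n, (inner ℂ (S n u) (a v) : ℂ) = inner ℂ u (a (S n v)) := by
      intro n
      rw [hSsymm n u (a v)]
      congr 1
      have := congrArg (fun T : H →L[ℂ] H => T v) (hcomm n)
      simpa [ContinuousLinearMap.mul_apply] using this
    have hL : Tendsto (fun n => (inner ℂ (S n u) (a v) : ℂ)) atTop
        (𝓝 (inner ℂ (F u) (a v))) := (hF u).inner tendsto_const_nhds
    have hR : Tendsto (fun n => (inner ℂ u (a (S n v)) : ℂ)) atTop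
        (𝓝 (inner ℂ u (a (F v)))) :=
      tendsto_const_nhds.inner ((a.continuous.tendsto (F v)).comp (hF v))
    rw [funext hterm] at hL
    exact tendsto_nhds_unique hL hR
  -- Cauchy–Schwarz via the square root of `a`
  set r : H →L[ℂ] H := CFC.sqrt a with hr_def
  have hr0 : (0 : H →L[ℂ] H) ≤ r := CFC.sqrt_nonneg a
  have hrsa : IsSelfAdjoint r := IsSelfAdjoint.of_nonneg hr0
  have hrr : r * r = a := CFC.sqrt_mul_sqrt_self a ha0
  have hkey : ∀ x y : H, (inner ℂ x (a y) : ℂ) = inner ℂ (r x) (r y) := by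
    intro x y
    have h6 : (inner ℂ x (a y) : ℂ) = inner ℂ x (r (r y)) := by rw [← hrr]; rfl
    rw [h6]
    exact (hrsa.isSymmetric x (r y)).symm
  have hnorm_eq : ∀ x : H, Real.sqrt ((inner ℂ x (a x) : ℂ)).re = ‖r x‖ := by
    intro x
    rw [hkey x x]
    rw [show (inner ℂ (r x) (r x) : ℂ) = ((‖r x‖ : ℂ)) ^ 2 from inner_self_eq_norm_sq_to_K _]
    rw [show (((‖r x‖ : ℂ)) ^ 2).re = ‖r x‖ ^ 2 by
      rw [← Complex.ofReal_pow, Complex.ofReal_re]]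
    exact Real.sqrt_sq (norm_nonneg _)
  refine ⟨{ toFun := F, map_add' := Fadd, map_smul' := Fsmul }, p1, p2, p3, ?_, ?_⟩
  · intro u v
    show (inner ℂ u (η₂ v) : ℂ) = inner ℂ u (a (F v))
    rw [pcomm v]
  · intro u v
    have h4 : (inner ℂ u (η₂ v) : ℂ) = inner ℂ u (a (F v)) := by rw [pcomm v]
    have h5 : (inner ℂ (F v) (a (F v)) : ℂ) = inner ℂ v (a v) := by
      rw [p3 v (F v)]
      congr 2
      exact p2 v
    calc ‖(inner ℂ u (η₂ v) : ℂ)‖ = ‖(inner ℂ (r u) (r (F v)) : ℂ)‖ := by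
          rw [h4, hkey]
      _ ≤ ‖r u‖ * ‖r (F v)‖ := norm_inner_le_norm _ _
      _ = Real.sqrt ((inner ℂ u (a u) : ℂ)).re * Real.sqrt ((inner ℂ v (a v) : ℂ)).re := by
          rw [hnorm_eq u]
          congr 1
          rw [← hnorm_eq (F v), h5]
end
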